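/- For every k ∈ [0,1] and every α ∈ ℝ, one has the identity 108 + 216(1-k) - 144√3·√(k - k²)·cos α - 216√(1-k)·sin α - 72(1-k)·cos²α + 36(1-k)·sin²α = 36·[(3√(1-k)·sin α - 1)² + (√(2k) - √(6(1-k))·cos α)²]; in particular this expression is nonnegative, and for α ∈ [0, π/2] it vanishes exactly when k = 2/3, sin α = √(1/3) and cos α = √(2/3). -/
import Mathlib


/-- The boundary value `d(3^{-1/3}, k, α)` of the rescaled lower-bound function for
the tangential Hessian at the blow-up of the critical point. -/
noncomputable def dBoundary (k α : ℝ) : ℝ :=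
  108 + 216 * (1 - k) - 144 * Real.sqrt 3 * Real.sqrt (k - k ^ 2) * Real.cos α
    - 216 * Real.sqrt (1 - k) * Real.sin α
    - 72 * (1 - k) * Real.cos α ^ 2 + 36 * (1 - k) * Real.sin α ^ 2

/-- For every `k ∈ [0,1]` and `α ∈ ℝ`, `d(3^{-1/3}, k, α)` equals
`36[(3√(1-k)·sin α - 1)² + (√(2k) - √(6(1-k))·cos α)²]`; in particular it is
nonnegative, and for `α ∈ [0, π/2]` it vanishes exactly when `k = 2/3`,
`sin α = √(1/3)` and `cos α = √(2/3)`. -/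
theorem boundary_value_sum_of_squares (k : ℝ) (hk : k ∈ Set.Icc (0:ℝ) 1) (α : ℝ) :
    dBoundary k α =
      36 * ((3 * Real.sqrt (1 - k) * Real.sin α - 1) ^ 2
        + (Real.sqrt (2 * k) - Real.sqrt (6 * (1 - k)) * Real.cos α) ^ 2) ∧
    0 ≤ dBoundary k α ∧
    (α ∈ Set.Icc (0:ℝ) (Real.pi / 2) →
      (dBoundary k α = 0 ↔
        k = 2/3 ∧ Real.sin α = Real.sqrt (1/3) ∧ Real.cos α = Real.sqrt (2/3))) := by
  obtain ⟨hk0, hk1⟩ := hk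
  have hs : Real.sqrt (1 - k) ^ 2 = 1 - k := Real.sq_sqrt (by linarith)
  have hp : Real.sqrt (2 * k) ^ 2 = 2 * k := Real.sq_sqrt (by linarith)
  have hq : Real.sqrt (6 * (1 - k)) ^ 2 = 6 * (1 - k) := Real.sq_sqrt (by linarith)
  have hpyth : Real.sin α ^ 2 + Real.cos α ^ 2 = 1 := Real.sin_sq_add_cos_sq α
  have hsqrt4 : Real.sqrt 4 = 2 := by
    rw [show (4:ℝ) = 2 ^ 2 by norm_num, Real.sqrt_sq (by norm_num)]
  have key : Real.sqrt (2 * k) * Real.sqrt (6 * (1 - k))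
      = 2 * Real.sqrt 3 * Real.sqrt (k - k ^ 2) := by
    have h1 : Real.sqrt (2 * k) * Real.sqrt (6 * (1 - k))
        = Real.sqrt (12 * (k - k ^ 2)) := by
      rw [← Real.sqrt_mul (by linarith)]
      congr 1
      ring
    have h2 : 2 * Real.sqrt 3 * Real.sqrt (k - k ^ 2)
        = Real.sqrt (12 * (k - k ^ 2)) := by
      rw [← hsqrt4, ← Real.sqrt_mul (by norm_num), ← Real.sqrt_mul (by norm_num)]
      norm_num
    rw [h1, h2]
  have heq : dBoundary k α =
      36 * ((3 * Real.sqrt (1 - k) * Real.sin α - 1) ^ 2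
        + (Real.sqrt (2 * k) - Real.sqrt (6 * (1 - k)) * Real.cos α) ^ 2) := by
    unfold dBoundary
    linear_combination (72 * Real.cos α) * key + (-324 * Real.sin α ^ 2) * hs
      + (-36 : ℝ) * hp + (-36 * Real.cos α ^ 2) * hq + (-288 * (1 - k)) * hpyth
  refine ⟨heq, by rw [heq]; positivity, ?_⟩
  rintro ⟨hα0, hα2⟩
  constructor
  · intro h0
    rw [heq] at h0
    have hA : 3 * Real.sqrt (1 - k) * Real.sin α - 1 = 0 := by
      nlinarith [sq_nonneg (3 * Real.sqrt (1 - k) * Real.sin α - 1),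
        sq_nonneg (Real.sqrt (2 * k) - Real.sqrt (6 * (1 - k)) * Real.cos α)]
    have hB : Real.sqrt (2 * k) - Real.sqrt (6 * (1 - k)) * Real.cos α = 0 := by
      nlinarith [sq_nonneg (3 * Real.sqrt (1 - k) * Real.sin α - 1),
        sq_nonneg (Real.sqrt (2 * k) - Real.sqrt (6 * (1 - k)) * Real.cos α)]
    have hA2 : 9 * (1 - k) * Real.sin α ^ 2 = 1 := by
      have h : (3 * Real.sqrt (1 - k) * Real.sin α) ^ 2 = 1 ^ 2 := by
        rw [show 3 * Real.sqrt (1 - k) * Real.sin α = 1 from by linarith]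
      linear_combination h - (9 * Real.sin α ^ 2) * hs
    have hB2 : 2 * k = 6 * (1 - k) * Real.cos α ^ 2 := by
      have h : Real.sqrt (2 * k) ^ 2
          = (Real.sqrt (6 * (1 - k)) * Real.cos α) ^ 2 := by
        rw [show Real.sqrt (2 * k) = Real.sqrt (6 * (1 - k)) * Real.cos α
          from by linarith]
      linear_combination h - hp + Real.cos α ^ 2 * hq
    have hk23 : k = 2 / 3 := by
      linear_combination (-1/12 : ℝ) * hA2 + (1/8 : ℝ) * hB2
        + (3/4 * (1 - k)) * hpyth
    have hsin0 : 0 ≤ Real.sin α := Real.sin_nonneg_of_nonneg_of_le_pi hα0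
      (by linarith [Real.pi_pos])
    have hcos0 : 0 ≤ Real.cos α := Real.cos_nonneg_of_mem_Icc
      ⟨by linarith [Real.pi_pos], hα2⟩
    have hsin2 : Real.sin α ^ 2 = 1 / 3 := by rw [hk23] at hA2; linarith
    have hcos2 : Real.cos α ^ 2 = 2 / 3 := by rw [hk23] at hB2; linarith
    refine ⟨hk23, ?_, ?_⟩
    · rw [← hsin2, Real.sqrt_sq hsin0]
    · rw [← hcos2, Real.sqrt_sq hcos0]
  · rintro ⟨hk23, hs1, hc1⟩
    rw [heq, hk23, hs1, hc1]
    have e1 : Real.sqrt (1 - 2/3 : ℝ) = Real.sqrt (1/3) := by norm_num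
    have e2 : Real.sqrt (1/3) * Real.sqrt (1/3) = 1/3 :=
      Real.mul_self_sqrt (by norm_num)
    have e3 : Real.sqrt (6 * (1 - 2/3) : ℝ) * Real.sqrt (2/3)
        = Real.sqrt (2 * (2/3) : ℝ) := by
      rw [← Real.sqrt_mul (by norm_num)]
      norm_num
    rw [e1]
    have t1 : 3 * Real.sqrt (1/3) * Real.sqrt (1/3) - 1 = 0 := by
      linear_combination 3 * e2
    have t2 : Real.sqrt (2 * (2/3) : ℝ)
        - Real.sqrt (6 * (1 - 2/3) : ℝ) * Real.sqrt (2/3) = 0 := by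
      rw [e3]; ring
    linear_combination
      (36 * (3 * Real.sqrt (1/3) * Real.sqrt (1/3) - 1)) * t1
      + (36 * (Real.sqrt (2 * (2/3) : ℝ)
          - Real.sqrt (6 * (1 - 2/3) : ℝ) * Real.sqrt (2/3))) * t2
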